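/- Let τ be in the upper half-plane, assume θ₁'(0|τ) ≠ 0, and let w ∈ ℂ with θ₁(w|τ) ≠ 0. Then the function J_w(t) = ∂_t σ(w,t) + (ρ(t) + ρ(w))·σ(w,t) is regular at t = 0: there exists c ∈ ℂ such that J_w(t) tends to c as t → 0 within t ≠ 0 (the simple poles of ∂_tσ, ρ and σ at t = 0 cancel). -/

import Mathlib

open Complex

/-- Jacobi's theta function `θ₁(t|τ)`. -/
noncomputable def theta1 (τ t : ℂ) : ℂ :=
  -∑' j : ℤ, Complex.exp ((Real.pi : ℂ) * Complex.I * ((j : ℂ) + 1/2)^2 * τ +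
      2 * (Real.pi : ℂ) * Complex.I * ((j : ℂ) + 1/2) * (t + 1/2))

/-- The derivative `θ₁'(t|τ)` of `θ₁` in `t`. -/
noncomputable def theta1' (τ t : ℂ) : ℂ := deriv (theta1 τ) t

/-- `ρ(t) = θ₁'(t|τ)/θ₁(t|τ)`. -/
noncomputable def rho (τ t : ℂ) : ℂ := theta1' τ t / theta1 τ t

/-- `σ(w,t) = θ₁(w−t|τ)·θ₁'(0|τ)/(θ₁(w|τ)·θ₁(t|τ))`. -/
noncomputable def sigma (τ w t : ℂ) : ℂ :=
  theta1 τ (w - t) * theta1' τ 0 / (theta1 τ w * theta1 τ t)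

open Filter

lemma theta1_eq_jacobi (τ t : ℂ) :
    theta1 τ t = -(cexp ((Real.pi : ℂ) * I * τ / 4 + (Real.pi : ℂ) * I * (t + 1/2)) *
        jacobiTheta₂ (t + 1/2 + τ/2) τ) := by
  rw [theta1, jacobiTheta₂, ← tsum_mul_left]
  congr 1
  refine tsum_congr fun j => ?_
  rw [jacobiTheta₂_term, ← Complex.exp_add]
  congr 1
  ring

lemma theta1_differentiable {τ : ℂ} (hτ : 0 < τ.im) : Differentiable ℂ (theta1 τ) := by
  have : theta1 τ = fun t => -(cexp ((Real.pi : ℂ) * I * τ / 4 + (Real.pi : ℂ) * I * (t + 1/2)) *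
        jacobiTheta₂ (t + 1/2 + τ/2) τ) := funext (theta1_eq_jacobi τ)
  rw [this]
  intro t
  refine DifferentiableAt.neg (DifferentiableAt.mul ?_ ?_)
  · exact ((differentiableAt_const _).add
      ((differentiableAt_id.add_const _).const_mul _)).cexp
  · exact (differentiableAt_jacobiTheta₂_fst _ hτ).comp t
      ((differentiableAt_id.add_const _).add_const _)

lemma theta1_zero (τ : ℂ) : theta1 τ 0 = 0 := by
  have key : ∀ j : ℤ,
      Complex.exp ((Real.pi : ℂ) * Complex.I * (((-1 - j : ℤ) : ℂ) + 1/2)^2 * τ +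
        2 * (Real.pi : ℂ) * Complex.I * (((-1 - j : ℤ) : ℂ) + 1/2) * ((0:ℂ) + 1/2))
      = - Complex.exp ((Real.pi : ℂ) * Complex.I * ((j : ℂ) + 1/2)^2 * τ +
        2 * (Real.pi : ℂ) * Complex.I * ((j : ℂ) + 1/2) * ((0:ℂ) + 1/2)) := by
    intro j
    have harg : ((Real.pi : ℂ) * Complex.I * (((-1 - j : ℤ) : ℂ) + 1/2)^2 * τ +
        2 * (Real.pi : ℂ) * Complex.I * (((-1 - j : ℤ) : ℂ) + 1/2) * ((0:ℂ) + 1/2))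
        = ((Real.pi : ℂ) * Complex.I * ((j : ℂ) + 1/2)^2 * τ +
        2 * (Real.pi : ℂ) * Complex.I * ((j : ℂ) + 1/2) * ((0:ℂ) + 1/2))
        + (Real.pi : ℂ) * Complex.I + ((-(j+1) : ℤ) : ℂ) * (2 * (Real.pi : ℂ) * Complex.I) := by
      push_cast
      ring
    rw [harg, Complex.exp_add, Complex.exp_add, Complex.exp_int_mul_two_pi_mul_I,
      Complex.exp_pi_mul_I]
    ring
  rw [theta1, neg_eq_zero]
  have h2 : (∑' j : ℤ, Complex.exp ((Real.pi : ℂ) * Complex.I * ((j : ℂ) + 1/2)^2 * τ +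
      2 * (Real.pi : ℂ) * Complex.I * ((j : ℂ) + 1/2) * ((0:ℂ) + 1/2)))
      = -(∑' j : ℤ, Complex.exp ((Real.pi : ℂ) * Complex.I * ((j : ℂ) + 1/2)^2 * τ +
      2 * (Real.pi : ℂ) * Complex.I * ((j : ℂ) + 1/2) * ((0:ℂ) + 1/2))) := by
    conv_lhs => rw [← (Equiv.subLeft (-1 : ℤ)).tsum_eq]
    rw [← tsum_neg]
    refine tsum_congr fun j => ?_
    simpa using key j
  have h3 : (2 : ℂ) * ∑' j : ℤ, Complex.exp ((Real.pi : ℂ) * Complex.I * ((j : ℂ) + 1/2)^2 * τ +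
      2 * (Real.pi : ℂ) * Complex.I * ((j : ℂ) + 1/2) * ((0:ℂ) + 1/2)) = 0 := by
    linear_combination h2
  exact (mul_eq_zero.mp h3).resolve_left two_ne_zero

/-- `J_w(t) = ∂_t σ(w,t) + (ρ(t)+ρ(w))·σ(w,t)` is regular at `t = 0`. -/
theorem Jw_regular_at_zero (τ : ℂ) (hτ : 0 < τ.im) (h0 : theta1' τ 0 ≠ 0)
    (w : ℂ) (hw : theta1 τ w ≠ 0) :
    ∃ c : ℂ, Filter.Tendsto
      (fun t : ℂ => deriv (fun s => sigma τ w s) t + (rho τ t + rho τ w) * sigma τ w t)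
      (nhdsWithin 0 {(0 : ℂ)}ᶜ) (nhds c) := by
  have hdF : Differentiable ℂ (theta1 τ) := theta1_differentiable hτ
  have hA : AnalyticOnNhd ℂ (theta1 τ) Set.univ := fun z _ => hdF.analyticAt z
  have hA' : AnalyticOnNhd ℂ (deriv (theta1 τ)) Set.univ := hA.deriv
  have hF : ∀ z, HasDerivAt (theta1 τ) (deriv (theta1 τ) z) z := fun z => (hdF z).hasDerivAt
  have hF' : ∀ z, HasDerivAt (deriv (theta1 τ)) (deriv (deriv (theta1 τ)) z) z :=
    fun z => (hA' z trivial).differentiableAt.hasDerivAt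
  have hF0 : theta1 τ 0 = 0 := theta1_zero τ
  have h0' : deriv (theta1 τ) 0 ≠ 0 := h0
  have hslope : Tendsto (fun t => theta1 τ t / t) (nhdsWithin 0 {(0:ℂ)}ᶜ)
      (nhds (deriv (theta1 τ) 0)) := by
    have h := hasDerivAt_iff_tendsto_slope.mp (hF 0)
    simpa [slope_fun_def_field, hF0] using h
  have ht_ne : ∀ᶠ t in nhdsWithin 0 {(0:ℂ)}ᶜ, t ≠ 0 := by
    filter_upwards [self_mem_nhdsWithin] with t ht
    simpa using ht
  have hFne : ∀ᶠ t in nhdsWithin 0 {(0:ℂ)}ᶜ, theta1 τ t ≠ 0 := by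
    filter_upwards [hslope.eventually_ne h0', ht_ne] with t h1 h2
    intro h
    exact h1 (by simp [h])
  set g : ℂ → ℂ := fun s => deriv (theta1 τ) w * theta1 τ (w - s)
      - deriv (theta1 τ) (w - s) * theta1 τ w with hgdef
  have hinner : ∀ t : ℂ, HasDerivAt (fun s : ℂ => w - s) (-1) t := fun t => by
    simpa using (hasDerivAt_id t).const_sub w
  have hcomp : ∀ t : ℂ, HasDerivAt (fun s => theta1 τ (w - s))
      (deriv (theta1 τ) (w - t) * -1) t := fun t => (hF (w - t)).comp t (hinner t)
  have hcomp' : HasDerivAt (fun s => deriv (theta1 τ) (w - s))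
      (deriv (deriv (theta1 τ)) w * -1) 0 := by
    have := (hF' (w - 0)).comp 0 (hinner 0)
    simp only [sub_zero] at this
    exact this
  have hg : HasDerivAt g (deriv (theta1 τ) w * (deriv (theta1 τ) w * -1)
      - deriv (deriv (theta1 τ)) w * -1 * theta1 τ w) 0 := by
    have h1 := (hcomp 0).const_mul (deriv (theta1 τ) w)
    have h2 := hcomp'.mul_const (theta1 τ w)
    have := h1.sub h2
    simp only [sub_zero] at this
    exact this
  set G' : ℂ := deriv (theta1 τ) w * (deriv (theta1 τ) w * -1)
      - deriv (deriv (theta1 τ)) w * -1 * theta1 τ w with hG'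
  have hg0 : g 0 = 0 := by simp [hgdef]
  have hgslope : Tendsto (fun t => g t / t) (nhdsWithin 0 {(0:ℂ)}ᶜ) (nhds G') := by
    have h := hasDerivAt_iff_tendsto_slope.mp hg
    simpa [slope_fun_def_field, hg0] using h
  refine ⟨deriv (theta1 τ) 0 / theta1 τ w ^ 2 * (G' / deriv (theta1 τ) 0), ?_⟩
  have hq : Tendsto (fun t => g t / theta1 τ t) (nhdsWithin 0 {(0:ℂ)}ᶜ)
      (nhds (G' / deriv (theta1 τ) 0)) := by
    refine (hgslope.div hslope h0').congr' ?_
    filter_upwards [ht_ne] with t ht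
    rcases eq_or_ne (theta1 τ t) 0 with h' | h'
    · simp [h']
    · simp only [Pi.div_apply]
      field_simp
  have hmain := hq.const_mul (deriv (theta1 τ) 0 / theta1 τ w ^ 2)
  refine hmain.congr' ?_
  filter_upwards [hFne, ht_ne] with t hFt ht
  have hσ : HasDerivAt (fun s => theta1 τ (w - s) * deriv (theta1 τ) 0 /
        (theta1 τ w * theta1 τ s))
      ((deriv (theta1 τ) (w - t) * -1 * deriv (theta1 τ) 0 * (theta1 τ w * theta1 τ t)
        - theta1 τ (w - t) * deriv (theta1 τ) 0 * (theta1 τ w * deriv (theta1 τ) t))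
        / (theta1 τ w * theta1 τ t) ^ 2) t := by
    have hN : HasDerivAt (fun s => theta1 τ (w - s) * deriv (theta1 τ) 0)
        (deriv (theta1 τ) (w - t) * -1 * deriv (theta1 τ) 0) t := (hcomp t).mul_const _
    have hD : HasDerivAt (fun s => theta1 τ w * theta1 τ s)
        (theta1 τ w * deriv (theta1 τ) t) t := (hF t).const_mul _
    exact hN.div hD (mul_ne_zero hw hFt)
  simp only [sigma, rho, theta1']
  rw [hσ.deriv]
  field_simp
  ring
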